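/- For any differentiable function G: ℝ² → ℝ, the function π₁(t,x₁,x₂) = G(x₁²+x₂², t − (1/(B₀σ))·e^{σ(x₁²+x₂²)/2}·arctan(x₁/x₂)) satisfies the transport equation ∂ₜπ₁ + u₁∂ₓ₁π₁ + u₂∂ₓ₂π₁ = 0 with the Gaussian vortex field u₁ = B₀σx₂e^{−σ(x₁²+x₂²)/2}, u₂ = −B₀σx₁e^{−σ(x₁²+x₂²)/2}, on the domain {x₂ ≠ 0}. -/

import Mathlib

open Real

noncomputable def pdx (g : ℝ → ℝ → ℝ) (a b : ℝ) : ℝ := deriv (fun s => g s b) a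
noncomputable def pdy (g : ℝ → ℝ → ℝ) (a b : ℝ) : ℝ := deriv (fun s => g a s) b

theorem gaussian_vortex_transport_general_solution
    (B₀ σ : ℝ) (hB : B₀ ≠ 0) (hσ : 0 < σ)
    (G : ℝ × ℝ → ℝ) (hG : ContDiff ℝ 1 G)
    (π₁ : ℝ → ℝ → ℝ → ℝ)
    (hπ : ∀ t a b : ℝ, π₁ t a b =
      G (a ^ 2 + b ^ 2,
        t - (1 / (B₀ * σ)) * Real.exp ((σ / 2) * (a ^ 2 + b ^ 2)) * Real.arctan (a / b))) :
    ∀ t x₁ x₂ : ℝ, x₂ ≠ 0 →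
      deriv (fun s => π₁ s x₁ x₂) t
        + (B₀ * σ * x₂ * Real.exp (-(σ / 2) * (x₁ ^ 2 + x₂ ^ 2))) * pdx (π₁ t) x₁ x₂
        + (-(B₀ * σ * x₁ * Real.exp (-(σ / 2) * (x₁ ^ 2 + x₂ ^ 2)))) * pdy (π₁ t) x₁ x₂
        = 0 := by
  intro t x₁ x₂ hb
  have hBσ : B₀ * σ ≠ 0 := mul_ne_zero hB hσ.ne'
  simp only [pdx, pdy, hπ]
  set c : ℝ := 1 / (B₀ * σ) with hc
  set r : ℝ := x₁ ^ 2 + x₂ ^ 2 with hr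
  set E : ℝ := Real.exp ((σ / 2) * r) with hE
  set A : ℝ := Real.arctan (x₁ / x₂) with hA
  set p : ℝ × ℝ := (r, t - c * E * A) with hp
  have hGd : HasFDerivAt G (fderiv ℝ G p) p := (hG.differentiable one_ne_zero p).hasFDerivAt
  set L := fderiv ℝ G p with hL
  -- t-derivative
  have h0 : HasDerivAt (fun s => G (x₁ ^ 2 + x₂ ^ 2,
      s - c * E * A)) (L ((0 : ℝ), (1 : ℝ))) t := by
    have hcurve : HasDerivAt (fun s : ℝ => ((r, s - c * E * A) : ℝ × ℝ)) ((0 : ℝ), (1 : ℝ)) t :=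
      (hasDerivAt_const t r).prodMk ((hasDerivAt_id t).sub_const _)
    exact hGd.comp_hasDerivAt t hcurve
  -- x₁-derivative
  have hw1 : HasDerivAt (fun s : ℝ => s ^ 2 + x₂ ^ 2) (2 * x₁) x₁ := by
    simpa using (hasDerivAt_pow 2 x₁).add_const (x₂ ^ 2)
  have ha1 : HasDerivAt (fun s : ℝ => Real.arctan (s / x₂))
      (1 / (1 + (x₁ / x₂) ^ 2) * (1 / x₂)) x₁ := by
    have := (Real.hasDerivAt_arctan (x₁ / x₂)).comp x₁ ((hasDerivAt_id x₁).div_const x₂)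
    simpa [Function.comp_def] using this
  have he1 : HasDerivAt (fun s : ℝ => Real.exp ((σ / 2) * (s ^ 2 + x₂ ^ 2)))
      (E * ((σ / 2) * (2 * x₁))) x₁ := by
    have := (hw1.const_mul (σ / 2)).exp
    simpa [hE, hr, mul_comm] using this
  have h1 : HasDerivAt (fun s : ℝ => G (s ^ 2 + x₂ ^ 2,
      t - c * Real.exp ((σ / 2) * (s ^ 2 + x₂ ^ 2)) * Real.arctan (s / x₂)))
      (L (2 * x₁,
        -((c * (E * ((σ / 2) * (2 * x₁)))) * A + (c * E) * (1 / (1 + (x₁ / x₂) ^ 2) * (1 / x₂))))) x₁ := by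
    have hin : HasDerivAt (fun s : ℝ => t - c * Real.exp ((σ / 2) * (s ^ 2 + x₂ ^ 2)) * Real.arctan (s / x₂))
        (-((c * (E * ((σ / 2) * (2 * x₁)))) * A + (c * E) * (1 / (1 + (x₁ / x₂) ^ 2) * (1 / x₂)))) x₁ := by
      have := (hasDerivAt_const x₁ t).sub ((he1.const_mul c).mul ha1)
      convert this using 1
      all_goals first | rfl | exact (zero_sub _).symm
    have hcurve := hw1.prodMk hin
    have hpt : (fun s : ℝ => ((s ^ 2 + x₂ ^ 2,
        t - c * Real.exp ((σ / 2) * (s ^ 2 + x₂ ^ 2)) * Real.arctan (s / x₂)) : ℝ × ℝ)) x₁ = p := by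
      simp [hp, hr, hE, hA]
    rw [← hpt] at hGd
    exact hGd.comp_hasDerivAt x₁ hcurve
  -- x₂-derivative
  have hw2 : HasDerivAt (fun s : ℝ => x₁ ^ 2 + s ^ 2) (2 * x₂) x₂ := by
    simpa using (hasDerivAt_pow 2 x₂).const_add (x₁ ^ 2)
  have ha2 : HasDerivAt (fun s : ℝ => Real.arctan (x₁ / s))
      (1 / (1 + (x₁ / x₂) ^ 2) * (x₁ * -(x₂ ^ 2)⁻¹)) x₂ := by
    have hq : HasDerivAt (fun s : ℝ => x₁ / s) (x₁ * -(x₂ ^ 2)⁻¹) x₂ := by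
      simpa [div_eq_mul_inv] using (hasDerivAt_inv hb).const_mul x₁
    have := (Real.hasDerivAt_arctan (x₁ / x₂)).comp x₂ hq
    simpa [mul_comm, Function.comp_def] using this
  have he2 : HasDerivAt (fun s : ℝ => Real.exp ((σ / 2) * (x₁ ^ 2 + s ^ 2)))
      (E * ((σ / 2) * (2 * x₂))) x₂ := by
    have := (hw2.const_mul (σ / 2)).exp
    simpa [hE, hr, mul_comm] using this
  have h2 : HasDerivAt (fun s : ℝ => G (x₁ ^ 2 + s ^ 2,
      t - c * Real.exp ((σ / 2) * (x₁ ^ 2 + s ^ 2)) * Real.arctan (x₁ / s)))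
      (L (2 * x₂,
        -((c * (E * ((σ / 2) * (2 * x₂)))) * A + (c * E) * (1 / (1 + (x₁ / x₂) ^ 2) * (x₁ * -(x₂ ^ 2)⁻¹))))) x₂ := by
    have hin : HasDerivAt (fun s : ℝ => t - c * Real.exp ((σ / 2) * (x₁ ^ 2 + s ^ 2)) * Real.arctan (x₁ / s))
        (-((c * (E * ((σ / 2) * (2 * x₂)))) * A + (c * E) * (1 / (1 + (x₁ / x₂) ^ 2) * (x₁ * -(x₂ ^ 2)⁻¹)))) x₂ := by
      have := (hasDerivAt_const x₂ t).sub ((he2.const_mul c).mul ha2)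
      convert this using 1
      all_goals first | rfl | exact (zero_sub _).symm
    have hcurve := hw2.prodMk hin
    have hpt : (fun s : ℝ => ((x₁ ^ 2 + s ^ 2,
        t - c * Real.exp ((σ / 2) * (x₁ ^ 2 + s ^ 2)) * Real.arctan (x₁ / s)) : ℝ × ℝ)) x₂ = p := by
      simp [hp, hr, hE, hA]
    rw [← hpt] at hGd
    exact hGd.comp_hasDerivAt x₂ hcurve
  rw [h0.deriv, h1.deriv, h2.deriv]
  set u₁ : ℝ := B₀ * σ * x₂ * Real.exp (-(σ / 2) * r) with hu1
  set u₂ : ℝ := -(B₀ * σ * x₁ * Real.exp (-(σ / 2) * r)) with hu2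
  set va : ℝ × ℝ := ((2 * x₁ : ℝ),
    -((c * (E * ((σ / 2) * (2 * x₁)))) * A + (c * E) * (1 / (1 + (x₁ / x₂) ^ 2) * (1 / x₂)))) with hva
  set vb : ℝ × ℝ := ((2 * x₂ : ℝ),
    -((c * (E * ((σ / 2) * (2 * x₂)))) * A + (c * E) * (1 / (1 + (x₁ / x₂) ^ 2) * (x₁ * -(x₂ ^ 2)⁻¹)))) with hvb
  have hexp : Real.exp (-(σ / 2) * r) = E⁻¹ := by
    rw [hE, ← Real.exp_neg]; ring_nf
  have hEne : E ≠ 0 := Real.exp_ne_zero _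
  have hden : (1 : ℝ) + (x₁ / x₂) ^ 2 ≠ 0 := by positivity
  have key : ((0 : ℝ), (1 : ℝ)) + u₁ • va + u₂ • vb = (0 : ℝ × ℝ) := by
    apply Prod.ext
    · simp only [Prod.fst_add, Prod.smul_fst, Prod.fst_zero, smul_eq_mul, hva, hvb, hu1, hu2]
      ring
    · simp only [Prod.snd_add, Prod.smul_snd, Prod.snd_zero, smul_eq_mul, hva, hvb, hu1, hu2,
        hc, hexp]
      field_simp
      ring
  have e1 : u₁ * L va = L (u₁ • va) := by rw [map_smul]; rfl
  have e2 : u₂ * L vb = L (u₂ • vb) := by rw [map_smul]; rfl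
  rw [e1, e2, ← map_add, ← map_add, key, map_zero]
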